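/- Let α ∈ (0,2) and define a_n^{(α)} = (1/(2π)) ∫_{−π}^{π} e^{−i n η} (4 sin²(η/2))^{α/2} dη for n ∈ ℤ. Then a_0^{(α)} > 0, a_n^{(α)} = a_{−n}^{(α)} for all n, and a_n^{(α)} < 0 for every n ≠ 0. -/

import Mathlib

open MeasureTheory Real

noncomputable section

/-- The finite difference weight `a_n^{(α)} = (1/(2π)) ∫_{-π}^{π} e^{-inη} (4 sin²(η/2))^{α/2} dη`. -/
def aWeightC (α : ℝ) (n : ℤ) : ℂ :=
  (1 / (2 * Real.pi)) • ∫ η in (-Real.pi)..Real.pi,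
    Complex.exp (-Complex.I * (n : ℂ) * (η : ℂ)) *
      (((4 * Real.sin (η / 2) ^ 2) ^ (α / 2) : ℝ) : ℂ)

namespace AW

open Finset intervalIntegral

/-- `c β k = (-1)^k * binom(β, k)`. -/
def c (β : ℝ) : ℕ → ℝ
  | 0 => 1
  | k+1 => c β k * ((k : ℝ) - β) / ((k : ℝ) + 1)

@[simp] lemma c_zero : c β 0 = 1 := rfl

lemma c_succ {β : ℝ} (k : ℕ) : c β (k+1) = c β k * ((k : ℝ) - β) / ((k : ℝ) + 1) := rfl

lemma abs_c_le_one {β : ℝ} (hβ0 : 0 < β) (hβ1 : β < 1) (k : ℕ) : |c β k| ≤ 1 := by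
  induction k with
  | zero => simp
  | succ k ih =>
    rw [c_succ, abs_div, abs_mul]
    have h1 : |(k : ℝ) - β| ≤ (k : ℝ) + 1 := by
      rw [abs_le]; constructor <;> nlinarith [Nat.cast_nonneg (α := ℝ) k]
    have h2 : |(k : ℝ) + 1| = (k : ℝ) + 1 := abs_of_pos (by positivity)
    rw [h2, div_le_one (by positivity)]
    calc |c β k| * |(k : ℝ) - β| ≤ 1 * ((k:ℝ)+1) := by
          apply mul_le_mul ih h1 (abs_nonneg _) zero_le_one
      _ = (k:ℝ)+1 := one_mul _
  
lemma c_succ_neg {β : ℝ} (hβ0 : 0 < β) (hβ1 : β < 1) (k : ℕ) : c β (k+1) < 0 := by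
  induction k with
  | zero => simp [c_succ, c_zero]; linarith
  | succ k ih =>
    rw [c_succ]
    have h1 : (0:ℝ) < (k:ℝ) + 1 - β := by
      have : (0:ℝ) ≤ (k:ℝ) := Nat.cast_nonneg k
      linarith
    have h2 : (0:ℝ) < (k:ℝ) + 1 + 1 := by positivity
    push_cast
    exact div_neg_of_neg_of_pos (mul_neg_of_neg_of_pos ih h1) h2

lemma c_mul {β : ℝ} (k : ℕ) : ((k:ℝ)+1) * c β (k+1) = c β k * ((k : ℝ) - β) := by
  rw [c_succ]
  field_simp

lemma sum_c {β : ℝ} (N : ℕ) :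
    β * ∑ k ∈ range (N+1), c β k = -((N:ℝ)+1) * c β (N+1) := by
  induction N with
  | zero =>
    have := c_mul (β := β) 0
    simp at this ⊢
    linarith
  | succ N ih =>
    rw [Finset.sum_range_succ, mul_add, ih]
    have h1 := c_mul (β := β) (N+1)
    push_cast at h1 ⊢
    linarith

lemma sum_abs_c_le {β : ℝ} (hβ0 : 0 < β) (hβ1 : β < 1) (N : ℕ) : ∑ k ∈ range N, |c β k| ≤ 2 := by
  match N with
  | 0 => norm_num
  | 1 => simp
  | (M+2) =>
    have key : ∑ k ∈ range (M+2), |c β k| = 2 + ((M:ℝ)+1+1) * c β (M+2) / β := by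
      have h0 : ∑ k ∈ range (M+2), |c β k| = 1 + ∑ k ∈ range (M+1), |c β (k+1)| := by
        rw [Finset.sum_range_succ']; simp [add_comm]
      have h1 : ∀ k, |c β (k+1)| = -(c β (k+1)) :=
        fun k => abs_of_neg (c_succ_neg hβ0 hβ1 k)
      have h2 : ∑ k ∈ range (M+1), |c β (k+1)| = -∑ k ∈ range (M+2), c β k + 1 := by
        simp only [h1]
        rw [Finset.sum_neg_distrib]
        rw [Finset.sum_range_succ' (fun k => c β k) (M+1)]
        simp
      have h3 := sum_c (β := β) (M+1)
      rw [h0, h2]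
      have hb : β ≠ 0 := ne_of_gt hβ0
      field_simp
      push_cast at h3 ⊢
      nlinarith [h3]
    rw [key]
    have : ((M:ℝ)+1+1) * c β (M+2) / β ≤ 0 := by
      apply div_nonpos_of_nonpos_of_nonneg _ (le_of_lt hβ0)
      exact mul_nonpos_of_nonneg_of_nonpos (by positivity) (le_of_lt (c_succ_neg hβ0 hβ1 _))
    linarith

lemma summable_abs_c {β : ℝ} (hβ0 : 0 < β) (hβ1 : β < 1) : Summable (fun k => |c β k|) :=
  summable_of_sum_range_le (fun _ => abs_nonneg _) (sum_abs_c_le hβ0 hβ1)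

lemma summable_c {β : ℝ} (hβ0 : 0 < β) (hβ1 : β < 1) : Summable (c β) :=
  (summable_abs_c hβ0 hβ1).of_abs


-- summability lemmas
lemma summable_pow {β : ℝ} (hβ0 : 0 < β) (hβ1 : β < 1) {y : ℝ} (hy : |y| < 1) : Summable (fun k => c β k * y^k) := by
  apply Summable.of_norm_bounded (summable_geometric_of_lt_one (abs_nonneg y) hy)
  intro k
  rw [norm_mul, norm_pow]
  calc ‖c β k‖ * ‖y‖^k ≤ 1 * |y|^k := by
        apply mul_le_mul_of_nonneg_right (abs_c_le_one hβ0 hβ1 k) (by positivity)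
    _ = |y|^k := one_mul _

lemma summable_kpow {β : ℝ} (hβ0 : 0 < β) (hβ1 : β < 1) {y : ℝ} (hy : |y| < 1) :
    Summable (fun k => c β k * ((k:ℝ) * y^k)) := by
  have hsum : Summable (fun k : ℕ => (k:ℝ) * |y|^k) := by
    simpa using summable_pow_mul_geometric_of_norm_lt_one 1
      (by rw [Real.norm_eq_abs, abs_abs]; exact hy : ‖|y|‖ < 1)
  apply Summable.of_norm_bounded hsum
  intro k
  rw [norm_mul, norm_mul, norm_pow]
  simp only [Real.norm_eq_abs, Nat.abs_cast]
  calc |c β k| * ((k:ℝ) * |y|^k) ≤ 1 * ((k:ℝ) * |y|^k) := by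
        apply mul_le_mul_of_nonneg_right (abs_c_le_one hβ0 hβ1 k) (by positivity)
    _ = (k:ℝ) * |y|^k := one_mul _

lemma summable_kpow' {β : ℝ} (hβ0 : 0 < β) (hβ1 : β < 1) {y : ℝ} (hy : |y| < 1) :
    Summable (fun k => c β k * ((k:ℝ) * y^(k-1))) := by
  have h := (summable_kpow hβ0 hβ1 (β := β) hy).mul_left (y⁻¹)
  rcases eq_or_ne y 0 with rfl | hy0
  · apply summable_of_ne_finset_zero (s := {0, 1})
    intro k hk
    simp only [Finset.mem_insert, Finset.mem_singleton, not_or] at hk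
    have hk1 : 2 ≤ k := by omega
    have : k - 1 ≠ 0 := by omega
    simp [zero_pow this]
  · apply h.congr
    intro k
    cases k with
    | zero => simp
    | succ k => simp only [Nat.add_sub_cancel]; push_cast; field_simp; ring

lemma ode_identity {β : ℝ} (hβ0 : 0 < β) (hβ1 : β < 1) {y : ℝ} (hy : |y| < 1) :
    (1 - y) * (∑' k, c β k * ((k:ℝ) * y^(k-1))) + β * (∑' k, c β k * y^k) = 0 := by
  have S1 := summable_pow hβ0 hβ1 (β := β) hy
  have S2 := summable_kpow hβ0 hβ1 (β := β) hy
  have S3 := summable_kpow' hβ0 hβ1 (β := β) hy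
  set A := ∑' k, c β k * ((k:ℝ) * y^(k-1)) with hA
  -- A = ∑' k, c β k * ((k:ℝ)-β) * y^k
  have hshift : A = ∑' k, c β k * ((k:ℝ)-β) * y^k := by
    rw [hA, Summable.tsum_eq_zero_add S3]
    simp only [Nat.cast_zero, zero_mul, mul_zero, zero_add, pow_zero]
    apply tsum_congr
    intro k
    have hc := c_mul (β := β) k
    push_cast
    rw [← hc]; ring
  have hsplit : ∑' k, c β k * ((k:ℝ)-β) * y^k
      = (∑' k, c β k * ((k:ℝ) * y^k)) - β * (∑' k, c β k * y^k) := by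
    rw [← tsum_mul_left, ← Summable.tsum_sub S2 (S1.mul_left β)]
    apply tsum_congr; intro k; ring
  have hyA : y * A = ∑' k, c β k * ((k:ℝ) * y^k) := by
    rw [hA, ← tsum_mul_left]
    apply tsum_congr
    intro k
    cases k with
    | zero => simp
    | succ k => simp only [Nat.add_sub_cancel]; push_cast; ring
  have : (1-y) * A = A - y * A := by ring
  rw [this, hyA, hshift, hsplit]
  ring

lemma hasSum_c {β : ℝ} (hβ0 : 0 < β) (hβ1 : β < 1) {x : ℝ} (hx0 : 0 ≤ x) (hx1 : x < 1) :
    HasSum (fun k => c β k * x^k) ((1-x)^β) := by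
  set r : ℝ := (x+1)/2 with hr
  have hr0 : 0 < r := by rw [hr]; linarith
  have hr1 : r < 1 := by rw [hr]; linarith
  have hxr : x < r := by rw [hr]; linarith
  set g : ℝ → ℝ := fun z => ∑' k, c β k * z^k with hg
  set g' : ℝ → ℝ := fun z => ∑' k, c β k * ((k:ℝ) * z^(k-1)) with hg'
  -- derivative of g on Ioo (-r) r
  have hderiv : ∀ y ∈ Set.Ioo (-r) r, HasDerivAt g (g' y) y := by
    intro y hy
    have hu : Summable (fun k : ℕ => r⁻¹ * ((k:ℝ) * r^k)) := by
      apply Summable.mul_left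
      simpa using summable_pow_mul_geometric_of_norm_lt_one 1
        (by rw [Real.norm_eq_abs, abs_of_pos hr0]; exact hr1 : ‖r‖ < 1)
    have hd1 : ∀ (k : ℕ) (z : ℝ), z ∈ Set.Ioo (-r) r →
        HasDerivAt (fun z => c β k * z^k) (c β k * ((k:ℝ) * z^(k-1))) z := by
      intro k z _
      exact (hasDerivAt_pow k z).const_mul (c β k)
    have hd2 : ∀ (k : ℕ) (z : ℝ), z ∈ Set.Ioo (-r) r →
        ‖c β k * ((k:ℝ) * z^(k-1))‖ ≤ r⁻¹ * ((k:ℝ) * r^k) := by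
      intro k z hz
      have hzr : |z| ≤ r := by
        rw [abs_le]; exact ⟨le_of_lt hz.1, le_of_lt hz.2⟩
      rw [Real.norm_eq_abs, abs_mul, abs_mul]
      have h1 : |c β k| ≤ 1 := abs_c_le_one hβ0 hβ1 k
      have h2 : |z^(k-1)| ≤ r^(k-1) := by
        rw [abs_pow]
        exact pow_le_pow_left₀ (abs_nonneg z) hzr _
      have h3 : |(k:ℝ)| * |z^(k-1)| ≤ (k:ℝ) * r^(k-1) := by
        rw [Nat.abs_cast]
        exact mul_le_mul_of_nonneg_left h2 (Nat.cast_nonneg k)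
      have h4 : (k:ℝ) * r^(k-1) = r⁻¹ * ((k:ℝ) * r^k) := by
        cases k with
        | zero => simp
        | succ k =>
          simp only [Nat.add_sub_cancel]
          rw [pow_succ]
          field_simp
      calc |c β k| * (|(k:ℝ)| * |z^(k-1)|) ≤ 1 * ((k:ℝ) * r^(k-1)) :=
            mul_le_mul h1 h3 (by positivity) zero_le_one
        _ = r⁻¹ * ((k:ℝ) * r^k) := by rw [one_mul, h4]
    have h0 : Summable (fun k : ℕ => c β k * (0:ℝ)^k) := by
      apply summable_of_ne_finset_zero (s := ({0} : Finset ℕ))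
      intro k hk
      have : k ≠ 0 := by simpa using hk
      simp [zero_pow this]
    exact hasDerivAt_tsum_of_isPreconnected hu isOpen_Ioo
      (convex_Ioo _ _).isPreconnected hd1 hd2
      (Set.mem_Ioo.mpr ⟨by linarith, hr0⟩) h0 hy
  -- h := g * (1-·)^(-β) has zero derivative on [0, x]
  set h : ℝ → ℝ := fun z => g z * (1-z)^(-β) with hh
  have hDh : ∀ y ∈ Set.Icc 0 x, HasDerivAt h 0 y := by
    intro y hy
    have hy1 : y < 1 := lt_of_le_of_lt hy.2 hx1
    have hy1' : (0:ℝ) < 1 - y := by linarith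
    have hymem : y ∈ Set.Ioo (-r) r := ⟨by linarith [hy.1], lt_of_le_of_lt hy.2 hxr⟩
    have hyabs : |y| < 1 := by rw [abs_lt]; constructor <;> linarith [hy.1]
    have hgd := hderiv y hymem
    have hφ : HasDerivAt (fun z => (1-z)^(-β)) (β * (1-y)^(-β-1)) y := by
      have hbase : HasDerivAt (fun z : ℝ => 1 - z) (-1) y := by
        simpa using (hasDerivAt_id y).const_sub 1
      have := hbase.rpow_const (p := -β) (Or.inl (ne_of_gt hy1'))
      convert this using 1
      ring
    have := hgd.mul hφ
    refine this.congr_deriv ?_; symm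
    have hfact : (1-y)^(-β) = (1-y) * (1-y)^(-β-1) := by
      have hf := Real.rpow_add hy1' 1 (-β-1)
      rw [Real.rpow_one, show (1:ℝ) + (-β-1) = -β from by ring] at hf
      exact hf
    have e1 : (1 - y) * g' y + β * g y = 0 := by
      simpa [hg, hg'] using ode_identity hβ0 hβ1 (β := β) hyabs
    rw [hfact]
    linear_combination (-((1-y)^(-β-1))) * e1
  have hconst := constant_of_has_deriv_right_zero
    (f := h) (a := 0) (b := x)
    (fun y hy => ((hDh y hy).continuousAt).continuousWithinAt)
    (fun y hy => ((hDh y (Set.mem_Icc.mpr ⟨hy.1, le_of_lt hy.2⟩)).hasDerivWithinAt))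
  have hx_mem : x ∈ Set.Icc (0:ℝ) x := Set.mem_Icc.mpr ⟨hx0, le_refl x⟩
  have hhx := hconst x hx_mem
  have h0 : h 0 = 1 := by
    rw [hh, hg]
    simp only
    have : (∑' k, c β k * (0:ℝ)^k) = 1 := by
      rw [tsum_eq_single 0]
      · simp
      · intro k hk; simp [zero_pow hk]
    rw [this]
    norm_num
  rw [h0] at hhx
  have hx1' : (0:ℝ) < 1 - x := by linarith
  have hhx' : g x * (1-x)^(-β) = 1 := hhx
  have hgx : g x = (1-x)^β := by
    have : g x * (1-x)^(-β) * (1-x)^β = 1 * (1-x)^β := by rw [hhx']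
    rwa [mul_assoc, ← Real.rpow_add hx1', neg_add_cancel, Real.rpow_zero, mul_one, one_mul] at this
  have hxabs : |x| < 1 := by rw [abs_of_nonneg hx0]; exact hx1
  have := (summable_pow hβ0 hβ1 (β := β) hxabs).hasSum
  rwa [show (∑' k, c β k * x^k) = (1-x)^β from hgx] at this

/-- extended binomial coefficient `C(2k, k+n)` -/
def B (k : ℕ) (n : ℤ) : ℝ :=
  if 0 ≤ (k:ℤ) + n then (((2*k).choose ((k:ℤ)+n).toNat : ℕ) : ℝ) else 0

lemma B_nonneg (k : ℕ) (n : ℤ) : 0 ≤ B k n := by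
  unfold B; split <;> positivity

lemma B_symm (k : ℕ) (n : ℤ) : B k n = B k (-n) := by
  unfold B
  rcases le_or_gt 0 ((k:ℤ)+n) with h | h
  · rcases le_or_gt 0 ((k:ℤ)+(-n)) with h' | h'
    · rw [if_pos h, if_pos h']
      congr 1
      have h1 : ((k:ℤ)+n).toNat ≤ 2*k := by omega
      have h2 : ((k:ℤ)+(-n)).toNat = 2*k - ((k:ℤ)+n).toNat := by omega
      rw [h2]
      exact (Nat.choose_symm h1).symm
    · rw [if_pos h, if_neg (not_le.mpr h')]
      have : 2*k < ((k:ℤ)+n).toNat := by omega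
      rw [Nat.choose_eq_zero_of_lt this]; simp
  · rw [if_neg (not_le.mpr h)]
    rcases le_or_gt 0 ((k:ℤ)+(-n)) with h' | h'
    · rw [if_pos h']
      have : 2*k < ((k:ℤ)+(-n)).toNat := by omega
      rw [Nat.choose_eq_zero_of_lt this]; simp
    · rw [if_neg (not_le.mpr h')]

lemma B_le (k : ℕ) (n : ℤ) : B k n ≤ 4^k := by
  unfold B
  split
  · have h1 : (2*k).choose ((k:ℤ)+n).toNat ≤ 2^(2*k) := by
      calc (2*k).choose ((k:ℤ)+n).toNat ≤ ∑ j ∈ range (2*k+1), (2*k).choose j := by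
            rcases le_or_gt (((k:ℤ)+n).toNat) (2*k) with h | h
            · exact Finset.single_le_sum (f := fun j => (2*k).choose j)
                (fun j _ => Nat.zero_le _) (Finset.mem_range.mpr (by omega))
            · rw [Nat.choose_eq_zero_of_lt h]; exact Nat.zero_le _
        _ = 2^(2*k) := Nat.sum_range_choose (2*k)
    calc ((((2*k).choose ((k:ℤ)+n).toNat : ℕ)) : ℝ) ≤ ((2^(2*k) : ℕ) : ℝ) := by
          exact_mod_cast h1
      _ = 4^k := by rw [pow_mul]; norm_num
  · positivity

/-- orthogonality -/
lemma integral_exp_int (m : ℤ) :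
    (∫ η in (-Real.pi)..Real.pi, Complex.exp (Complex.I * (m:ℂ) * (η:ℝ))) =
      if m = 0 then (2*Real.pi : ℝ) else 0 := by
  rcases eq_or_ne m 0 with rfl | hm
  · rw [if_pos rfl]
    simp
    push_cast
    ring
  · rw [if_neg hm]
    have hc : Complex.I * (m:ℂ) ≠ 0 := by
      simp [Complex.I_ne_zero, Complex.ext_iff]
      exact_mod_cast hm
    have := integral_exp_mul_complex (a := -Real.pi) (b := Real.pi) hc
    simp only [mul_assoc] at this ⊢
    rw [this]
    have key : Complex.exp (Complex.I * ((m:ℂ) * (Real.pi:ℂ))) =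
        Complex.exp (Complex.I * ((m:ℂ) * ((-Real.pi : ℝ):ℂ))) := by
      rw [show Complex.I * ((m:ℂ) * ((-Real.pi : ℝ):ℂ)) =
        Complex.I * ((m:ℂ) * (Real.pi:ℂ)) - (m:ℂ) * (2*(Real.pi:ℂ)*Complex.I) from by
          push_cast; ring]
      rw [Complex.exp_sub, Complex.exp_int_mul_two_pi_mul_I, div_one]
    rw [key, sub_self, zero_div]
    simp

/-- expansion of cos^2k into exponentials -/
lemma cos_pow_expand (k : ℕ) (η : ℝ) :
    ((Real.cos (η/2) ^ 2 : ℝ) : ℂ) ^ k =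
      (4:ℂ)⁻¹^k * ∑ j ∈ range (2*k+1),
        ((2*k).choose j : ℂ) * Complex.exp (Complex.I * (((j:ℤ) - k : ℤ) : ℂ) * (η:ℝ)) := by
  have h1 : ((Real.cos (η/2) ^ 2 : ℝ) : ℂ) ^ k = (Complex.cos (η/2 : ℝ)) ^ (2*k) := by
    push_cast
    rw [pow_mul]
  rw [h1, Complex.cos]
  have h2 : ((Complex.exp ((η/2:ℝ) * Complex.I) + Complex.exp (-((η/2:ℝ)) * Complex.I)) / 2) ^ (2*k)
      = (4:ℂ)⁻¹^k * (Complex.exp ((η/2:ℝ) * Complex.I) + Complex.exp (-((η/2:ℝ)) * Complex.I)) ^ (2*k) := by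
    rw [div_pow]
    rw [show ((2:ℂ))^(2*k) = 4^k by rw [pow_mul]; norm_num]
    rw [div_eq_inv_mul, inv_pow]
  rw [h2]
  congr 1
  rw [add_pow]
  rw [Finset.sum_congr rfl]
  intro j hj
  rw [Finset.mem_range] at hj
  rw [← Complex.exp_nat_mul, ← Complex.exp_nat_mul, ← Complex.exp_add]
  rw [mul_comm (Complex.exp _) _]
  congr 1
  rw [show ((j:ℂ) * ((η/2:ℝ) * Complex.I) + ((2*k - j : ℕ):ℂ) * (-((η/2:ℝ)) * Complex.I))
      = ((j:ℂ) - ((2*k - j : ℕ):ℂ)) * ((η:ℝ)/2) * Complex.I from by push_cast; ring]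
  have hcast : ((j:ℂ) - ((2*k - j : ℕ):ℂ)) = 2 * (((j:ℤ) - k : ℤ) : ℂ) := by
    rw [Nat.cast_sub (by omega : j ≤ 2*k)]
    push_cast
    ring
  rw [hcast]
  push_cast
  ring

/-- the key per-term integral -/
lemma integral_term (k : ℕ) (n : ℤ) :
    (∫ η in (-Real.pi)..Real.pi,
        Complex.exp (-Complex.I * (n:ℂ) * (η:ℝ)) * ((Real.cos (η/2) ^ 2 : ℝ) : ℂ) ^ k) =
      (2*Real.pi : ℝ) * (4:ℂ)⁻¹^k * (B k n : ℝ) := by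
  have hexp : ∀ η : ℝ, Complex.exp (-Complex.I * (n:ℂ) * (η:ℝ)) * ((Real.cos (η/2) ^ 2 : ℝ) : ℂ) ^ k
      = ∑ j ∈ range (2*k+1), (4:ℂ)⁻¹^k * ((2*k).choose j : ℂ) *
          Complex.exp (Complex.I * (((j:ℤ) - k - n : ℤ) : ℂ) * (η:ℝ)) := by
    intro η
    rw [cos_pow_expand, Finset.mul_sum, Finset.mul_sum]
    apply Finset.sum_congr rfl
    intro j _
    calc Complex.exp (-Complex.I * (n:ℂ) * (η:ℝ)) *
          ((4:ℂ)⁻¹^k * (((2*k).choose j : ℂ) * Complex.exp (Complex.I * (((j:ℤ) - k : ℤ) : ℂ) * (η:ℝ))))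
        = (4:ℂ)⁻¹^k * ((2*k).choose j : ℂ) *
            (Complex.exp (-Complex.I * (n:ℂ) * (η:ℝ)) * Complex.exp (Complex.I * (((j:ℤ) - k : ℤ) : ℂ) * (η:ℝ))) := by
          ring
      _ = (4:ℂ)⁻¹^k * ((2*k).choose j : ℂ) *
            Complex.exp (-Complex.I * (n:ℂ) * (η:ℝ) + Complex.I * (((j:ℤ) - k : ℤ) : ℂ) * (η:ℝ)) := by
          rw [← Complex.exp_add]
      _ = (4:ℂ)⁻¹^k * ((2*k).choose j : ℂ) *
            Complex.exp (Complex.I * (((j:ℤ) - k - n : ℤ) : ℂ) * (η:ℝ)) := by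
          rw [show -Complex.I * (n:ℂ) * (η:ℝ) + Complex.I * (((j:ℤ) - k : ℤ) : ℂ) * (η:ℝ)
              = Complex.I * (((j:ℤ) - k - n : ℤ) : ℂ) * (η:ℝ) from by push_cast; ring]
  rw [intervalIntegral.integral_congr (g := fun η => ∑ j ∈ range (2*k+1),
        (4:ℂ)⁻¹^k * ((2*k).choose j : ℂ) *
          Complex.exp (Complex.I * (((j:ℤ) - k - n : ℤ) : ℂ) * (η:ℝ)))
      (fun η _ => hexp η)]
  rw [intervalIntegral.integral_finset_sum]
  swap
  · intro j _
    apply Continuous.intervalIntegrable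
    apply Continuous.mul continuous_const
    exact Complex.continuous_exp.comp (by continuity)
  have heval : ∀ j ∈ range (2*k+1),
      (∫ η in (-Real.pi)..Real.pi, (4:ℂ)⁻¹^k * ((2*k).choose j : ℂ) *
          Complex.exp (Complex.I * (((j:ℤ) - k - n : ℤ) : ℂ) * (η:ℝ)))
      = (4:ℂ)⁻¹^k * ((2*k).choose j : ℂ) *
          (if ((j:ℤ) - k - n : ℤ) = 0 then (2*Real.pi : ℝ) else 0) := by
    intro j _
    rw [intervalIntegral.integral_const_mul, integral_exp_int]
  rw [Finset.sum_congr rfl heval]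
  -- now evaluate the finite sum
  by_cases hin : 0 ≤ (k:ℤ) + n ∧ (k:ℤ) + n ≤ 2*k
  · obtain ⟨h0, h2k⟩ := hin
    set j0 : ℕ := ((k:ℤ)+n).toNat with hj0
    have hj0r : j0 ∈ range (2*k+1) := Finset.mem_range.mpr (by omega)
    rw [Finset.sum_eq_single j0]
    · rw [if_pos (by omega : ((j0:ℤ) - k - n : ℤ) = 0)]
      unfold B
      rw [if_pos h0]
      push_cast
      ring
    · intro j _ hj
      rw [if_neg (by omega : ¬((j:ℤ) - k - n : ℤ) = 0)]
      simp
    · intro h; exact absurd hj0r h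
  · rw [Finset.sum_eq_zero]
    · unfold B
      rcases not_and_or.mp hin with h | h
      · rw [if_neg h]; simp
      · rw [if_pos (by omega), Nat.choose_eq_zero_of_lt (by omega)]
        simp
    · intro j hj
      rw [Finset.mem_range] at hj
      rw [if_neg (by omega : ¬((j:ℤ) - k - n : ℤ) = 0)]
      simp



def wseq (β : ℝ) (n : ℤ) (k : ℕ) : ℝ := c β k * ((4:ℝ)⁻¹^k * B k n)

lemma abs_w_le {β : ℝ} (n : ℤ) (k : ℕ) : |wseq β n k| ≤ |c β k| := by
  unfold wseq
  rw [abs_mul]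
  have h1 : |(4:ℝ)⁻¹^k * B k n| ≤ 1 := by
    rw [abs_of_nonneg (mul_nonneg (by positivity) (B_nonneg k n))]
    calc (4:ℝ)⁻¹^k * B k n ≤ (4:ℝ)⁻¹^k * 4^k :=
          mul_le_mul_of_nonneg_left (B_le k n) (by positivity)
      _ = 1 := by rw [← mul_pow]; norm_num
  calc |c β k| * |(4:ℝ)⁻¹^k * B k n| ≤ |c β k| * 1 :=
        mul_le_mul_of_nonneg_left h1 (abs_nonneg _)
    _ = |c β k| := mul_one _

lemma summable_w {β : ℝ} (hβ0 : 0 < β) (hβ1 : β < 1) (n : ℤ) : Summable (wseq β n) := by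
  apply Summable.of_abs
  apply Summable.of_nonneg_of_le (fun k => abs_nonneg _) (abs_w_le n)
    (summable_abs_c hβ0 hβ1)

/-- The main formula. -/
lemma aWeight_eq (α : ℝ) (hα0 : 0 < α) (hα2 : α < 2) (n : ℤ) :
    aWeightC α n = (((4:ℝ)^(α/2) * ∑' k, wseq (α/2) n k : ℝ) : ℂ) := by
  set β := α/2 with hβ
  have hβ0 : 0 < β := by rw [hβ]; linarith
  have hβ1 : β < 1 := by rw [hβ]; linarith
  set G : ℕ → ℝ → ℂ := fun k η => ((c β k : ℝ) : ℂ) * (((4:ℝ)^β : ℝ) : ℂ) *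
      (Complex.exp (-Complex.I * (n:ℂ) * (η:ℝ)) * ((Real.cos (η/2) ^ 2 : ℝ) : ℂ) ^ k) with hG
  have hπ : -Real.pi ≤ Real.pi := by linarith [Real.pi_pos]
  -- pointwise identity away from 0
  have hpt : ∀ η ∈ Set.Ioc (-Real.pi) Real.pi, η ≠ 0 →
      Complex.exp (-Complex.I * (n:ℂ) * (η:ℝ)) * (((4 * Real.sin (η/2)^2) ^ β : ℝ) : ℂ)
        = ∑' k, G k η := by
    intro η hη hη0
    have hs : Real.sin (η/2) ≠ 0 := by
      have h1 : -Real.pi < η/2 := by nlinarith [hη.1, Real.pi_pos]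
      have h2 : η/2 < Real.pi := by nlinarith [hη.2, Real.pi_pos]
      intro h
      exact hη0 (by have := (Real.sin_eq_zero_iff_of_lt_of_lt h1 h2).mp h; linarith)
    have hx0 : (0:ℝ) ≤ Real.cos (η/2)^2 := sq_nonneg _
    have hx1 : Real.cos (η/2)^2 < 1 := by
      have := Real.sin_sq_add_cos_sq (η/2)
      have hs2 : 0 < Real.sin (η/2)^2 := by positivity
      nlinarith
    have hHS := hasSum_c hβ0 hβ1 hx0 hx1
    have h1c : 1 - Real.cos (η/2)^2 = Real.sin (η/2)^2 := by
      have := Real.sin_sq_add_cos_sq (η/2); linarith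
    rw [h1c] at hHS
    have hreal : (4 * Real.sin (η/2)^2) ^ β
        = (4:ℝ)^β * ∑' k, c β k * (Real.cos (η/2)^2)^k := by
      rw [hHS.tsum_eq, Real.mul_rpow (by norm_num) (sq_nonneg _)]
    rw [hreal, Complex.ofReal_mul, Complex.ofReal_tsum]
    rw [show Complex.exp (-Complex.I * (n:ℂ) * (η:ℝ)) *
        ((Complex.ofReal ((4:ℝ)^β)) * ∑' k, ((c β k * (Real.cos (η/2)^2)^k : ℝ) : ℂ))
        = (Complex.exp (-Complex.I * (n:ℂ) * (η:ℝ)) * (Complex.ofReal ((4:ℝ)^β))) *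
          ∑' k, ((c β k * (Real.cos (η/2)^2)^k : ℝ) : ℂ) from by ring]
    rw [← tsum_mul_left]
    apply tsum_congr
    intro k
    rw [hG]
    push_cast
    ring
  -- integrability of each term
  have hGcont : ∀ k, Continuous (G k) := by
    intro k
    rw [hG]
    apply Continuous.mul continuous_const
    apply Continuous.mul
    · exact Complex.continuous_exp.comp (by continuity)
    · apply Continuous.pow
      exact Complex.continuous_ofReal.comp (by continuity)
  have hGint : ∀ k, IntegrableOn (G k) (Set.Ioc (-Real.pi) Real.pi) := fun k =>
    (hGcont k).integrableOn_Ioc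
  -- norm bound
  have hGnormle : ∀ k η, ‖G k η‖ ≤ |c β k| * (4:ℝ)^β := by
    intro k η
    rw [hG]
    simp only [norm_mul, Complex.norm_real]
    have h1 : ‖Complex.exp (-Complex.I * (n:ℂ) * (η:ℝ))‖ = 1 := by
      rw [Complex.norm_exp]
      convert Real.exp_zero using 2
      simp [Complex.ext_iff]
    have h2 : ‖((Real.cos (η/2) ^ 2 : ℝ) : ℂ) ^ k‖ ≤ 1 := by
      rw [norm_pow, Complex.norm_real, Real.norm_eq_abs]
      apply pow_le_one₀ (abs_nonneg _)
      rw [abs_of_nonneg (sq_nonneg _)]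
      nlinarith [Real.neg_one_le_cos (η/2), Real.cos_le_one (η/2), sq_nonneg (Real.cos (η/2))]
    calc ‖(c β k : ℝ)‖ * ‖((4:ℝ)^β : ℝ)‖ *
          (‖Complex.exp (-Complex.I * (n:ℂ) * (η:ℝ))‖ * ‖((Real.cos (η/2) ^ 2 : ℝ) : ℂ) ^ k‖)
        ≤ |c β k| * (4:ℝ)^β * (1 * 1) := by
          apply mul_le_mul
          · rw [Real.norm_eq_abs, Real.norm_eq_abs, abs_of_nonneg (by positivity : (0:ℝ) ≤ (4:ℝ)^β)]
          · apply mul_le_mul (le_of_eq h1) h2 (norm_nonneg _) zero_le_one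
          · positivity
          · positivity
      _ = |c β k| * (4:ℝ)^β := by ring
  have hGnorm : ∀ k, (∫ η in Set.Ioc (-Real.pi) Real.pi, ‖G k η‖) ≤ |c β k| * ((4:ℝ)^β * (2*Real.pi)) := by
    intro k
    calc (∫ η in Set.Ioc (-Real.pi) Real.pi, ‖G k η‖)
        ≤ (∫ _ in Set.Ioc (-Real.pi) Real.pi, |c β k| * (4:ℝ)^β) := by
          apply setIntegral_mono_on (hGint k).norm (integrableOn_const (by
            rw [Real.volume_Ioc]; exact ENNReal.ofReal_lt_top.ne)) measurableSet_Ioc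
          intro η _
          exact hGnormle k η
      _ = |c β k| * ((4:ℝ)^β * (2*Real.pi)) := by
          rw [setIntegral_const, Real.volume_real_Ioc_of_le hπ, smul_eq_mul]
          ring
  have hGsum : Summable (fun k => ∫ η in Set.Ioc (-Real.pi) Real.pi, ‖G k η‖) := by
    apply Summable.of_nonneg_of_le
      (fun k => integral_nonneg (fun η => norm_nonneg _)) hGnorm
    exact (summable_abs_c hβ0 hβ1).mul_right _
  have hswap := hasSum_integral_of_summable_integral_norm hGint hGsum
  -- value of each term's integral
  have hterm : ∀ k, (∫ η in Set.Ioc (-Real.pi) Real.pi, G k η)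
      = (((2*Real.pi) * ((4:ℝ)^β * (c β k * ((4:ℝ)⁻¹^k * B k n))) : ℝ) : ℂ) := by
    intro k
    rw [← intervalIntegral.integral_of_le hπ]
    rw [hG]
    simp only
    rw [intervalIntegral.integral_const_mul, integral_term]
    push_cast
    ring
  -- put it together
  unfold aWeightC
  rw [intervalIntegral.integral_of_le hπ]
  have hae : ∀ᵐ η ∂(volume.restrict (Set.Ioc (-Real.pi) Real.pi)), η ≠ (0:ℝ) := by
    apply ae_restrict_of_ae
    have hset : {a : ℝ | ¬ a ≠ 0} = {0} := by ext a; simp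
    rw [ae_iff, hset]
    exact measure_singleton 0
  have hcongr : (∫ η in Set.Ioc (-Real.pi) Real.pi,
      Complex.exp (-Complex.I * (n:ℂ) * (η:ℝ)) * (((4 * Real.sin (η/2)^2) ^ β : ℝ) : ℂ))
      = ∫ η in Set.Ioc (-Real.pi) Real.pi, ∑' k, G k η := by
    apply MeasureTheory.integral_congr_ae
    filter_upwards [hae, ae_restrict_mem measurableSet_Ioc] with η hη0 hη
    exact hpt η hη hη0
  rw [hβ] at hcongr ⊢
  rw [hcongr, ← hswap.tsum_eq]
  rw [show (fun k => ∫ η in Set.Ioc (-Real.pi) Real.pi, G k η)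
      = (fun k => (((2*Real.pi) * ((4:ℝ)^β * (c β k * ((4:ℝ)⁻¹^k * B k n))) : ℝ) : ℂ)) from
    funext hterm]
  rw [← Complex.ofReal_tsum]
  rw [Complex.real_smul]
  rw [← Complex.ofReal_mul]
  congr 1
  rw [tsum_mul_left, tsum_mul_left]
  unfold wseq
  have hπ0 : Real.pi ≠ 0 := Real.pi_ne_zero
  rw [hβ] at hβ0 hβ1 ⊢
  field_simp


lemma two_mul_centralBinom_le (k : ℕ) : 2 * Nat.centralBinom (k+1) ≤ 4^(k+1) := by
  induction k with
  | zero => decide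
  | succ k ih =>
    have key := Nat.succ_mul_centralBinom_succ (k+1)
    have h1 : (k+2) * (2 * Nat.centralBinom (k+2)) = 2 * (2 * (2*(k+1)+1) * Nat.centralBinom (k+1)) := by
      rw [show (k+1)+1 = k+2 from rfl] at key
      calc (k+2) * (2 * Nat.centralBinom (k+2)) = 2 * ((k+2) * Nat.centralBinom (k+2)) := by ring
        _ = 2 * (2 * (2*(k+1)+1) * Nat.centralBinom (k+1)) := by rw [key]
    have h2 : 2 * (2 * (2*(k+1)+1) * Nat.centralBinom (k+1))
        ≤ (k+2) * 4^(k+2) := by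
      calc 2 * (2 * (2*(k+1)+1) * Nat.centralBinom (k+1))
          = (2*(k+1)+1) * (2 * (2 * Nat.centralBinom (k+1))) := by ring
        _ ≤ (2*(k+2)) * (2 * 4^(k+1)) := by
            apply Nat.mul_le_mul (by omega) (Nat.mul_le_mul_left 2 ih)
        _ = (k+2) * 4^(k+2) := by ring
    have h3 : (k+2) * (2 * Nat.centralBinom (k+2)) ≤ (k+2) * 4^(k+2) := by omega
    exact Nat.le_of_mul_le_mul_left h3 (by omega)

lemma B_zero_eq (k : ℕ) : B k 0 = (Nat.centralBinom k : ℝ) := by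
  unfold B Nat.centralBinom
  rw [if_pos (by omega)]
  norm_num

lemma w_succ_zero_bound {β : ℝ} (hβ0 : 0 < β) (hβ1 : β < 1) (k : ℕ) :
    |wseq β 0 (k+1)| ≤ (1/2) * |c β (k+1)| := by
  unfold wseq
  rw [B_zero_eq, abs_mul]
  have h1 : |(4:ℝ)⁻¹^(k+1) * (Nat.centralBinom (k+1) : ℝ)| ≤ 1/2 := by
    rw [abs_of_nonneg (by positivity)]
    have := two_mul_centralBinom_le k
    have hc : (2 * Nat.centralBinom (k+1) : ℝ) ≤ (4:ℝ)^(k+1) := by exact_mod_cast this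
    rw [inv_pow, inv_mul_le_iff₀ (by positivity)]
    push_cast at hc ⊢
    linarith
  calc |c β (k+1)| * |(4:ℝ)⁻¹^(k+1) * (Nat.centralBinom (k+1) : ℝ)|
      ≤ |c β (k+1)| * (1/2) := mul_le_mul_of_nonneg_left h1 (abs_nonneg _)
    _ = (1/2) * |c β (k+1)| := by ring

lemma tsum_abs_c_succ_le {β : ℝ} (hβ0 : 0 < β) (hβ1 : β < 1) :
    (∑' k, |c β (k+1)|) ≤ 1 := by
  apply tsum_le_of_sum_range_le (fun k => abs_nonneg _)
  intro N
  have h := sum_abs_c_le hβ0 hβ1 (N+1)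
  rw [Finset.sum_range_succ'] at h
  simp at h
  linarith

lemma xval_zero_pos {β : ℝ} (hβ0 : 0 < β) (hβ1 : β < 1) :
    0 < (4:ℝ)^β * ∑' k, wseq β 0 k := by
  apply mul_pos (Real.rpow_pos_of_pos (by norm_num) β)
  have hS := summable_w hβ0 hβ1 0
  rw [Summable.tsum_eq_zero_add hS]
  have hw0 : wseq β 0 0 = 1 := by
    unfold wseq
    rw [B_zero_eq]
    simp [Nat.centralBinom]
  rw [hw0]
  have hsum1 : Summable (fun k => wseq β 0 (k+1)) := by
    exact (summable_nat_add_iff 1).mpr hS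
  have habs : |∑' k, wseq β 0 (k+1)| ≤ 1/2 := by
    calc |∑' k, wseq β 0 (k+1)| = ‖∑' k, wseq β 0 (k+1)‖ := (Real.norm_eq_abs _).symm
      _ ≤ ∑' k, ‖wseq β 0 (k+1)‖ :=
          norm_tsum_le_tsum_norm (by simpa [Real.norm_eq_abs] using hsum1.abs)
      _ = ∑' k, |wseq β 0 (k+1)| := by simp [Real.norm_eq_abs]
      _ ≤ ∑' k, (1/2) * |c β (k+1)| := by
          apply Summable.tsum_le_tsum (fun k => w_succ_zero_bound hβ0 hβ1 k)
          · exact hsum1.abs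
          · exact (((summable_abs_c hβ0 hβ1).comp_injective (add_left_injective 1))).mul_left _
      _ = (1/2) * ∑' k, |c β (k+1)| := by rw [tsum_mul_left]
      _ ≤ (1/2) * 1 := by
          apply mul_le_mul_of_nonneg_left (tsum_abs_c_succ_le hβ0 hβ1) (by norm_num)
      _ = 1/2 := by norm_num
  have := abs_le.mp habs
  linarith [this.1]

lemma B_natAbs_eq_one {n : ℤ} (hn : n ≠ 0) : B n.natAbs n = 1 := by
  unfold B
  rw [if_pos (by omega)]
  rcases lt_or_gt_of_ne hn with h | h
  · have : ((n.natAbs : ℤ) + n).toNat = 0 := by omega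
    rw [this]
    simp
  · have : ((n.natAbs : ℤ) + n).toNat = 2 * n.natAbs := by omega
    rw [this, Nat.choose_self]
    norm_num

lemma w_nonpos {β : ℝ} (hβ0 : 0 < β) (hβ1 : β < 1) {n : ℤ} (hn : n ≠ 0) (k : ℕ) :
    wseq β n k ≤ 0 := by
  unfold wseq
  cases k with
  | zero =>
    have hB : B 0 n = 0 := by
      unfold B
      rcases lt_or_gt_of_ne hn with h | h
      · rw [if_neg (by omega)]
      · rw [if_pos (by omega)]
        have : ((0:ℤ) + n).toNat ≠ 0 := by omega
        rw [Nat.choose_eq_zero_of_lt (by omega)]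
        norm_num
    rw [hB]
    simp
  | succ k =>
    apply mul_nonpos_of_nonpos_of_nonneg (le_of_lt (c_succ_neg hβ0 hβ1 k))
    exact mul_nonneg (by positivity) (B_nonneg _ _)

lemma xval_neg {β : ℝ} (hβ0 : 0 < β) (hβ1 : β < 1) {n : ℤ} (hn : n ≠ 0) :
    (4:ℝ)^β * ∑' k, wseq β n k < 0 := by
  apply mul_neg_of_pos_of_neg (Real.rpow_pos_of_pos (by norm_num) β)
  have hS := summable_w hβ0 hβ1 n
  set k₀ := n.natAbs with hk₀
  have hk₀1 : 1 ≤ k₀ := by omega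
  have hwk₀ : wseq β n k₀ < 0 := by
    unfold wseq
    rw [B_natAbs_eq_one hn]
    obtain ⟨m, hm⟩ := Nat.exists_eq_add_of_le hk₀1
    rw [hm, show 1 + m = m + 1 from by omega]
    have := c_succ_neg hβ0 hβ1 m
    have h4 : (0:ℝ) < (4:ℝ)⁻¹^(m+1) * 1 := by positivity
    nlinarith
  have hle : ∑' k, wseq β n k ≤ wseq β n k₀ := by
    have hneg : Summable (fun k => -(wseq β n k)) := hS.neg
    have h1 : -(wseq β n k₀) ≤ ∑' k, -(wseq β n k) :=
      Summable.le_tsum hneg k₀ (fun j _ => by linarith [w_nonpos hβ0 hβ1 hn j])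
    rw [tsum_neg] at h1
    linarith
  linarith


end AW

/-- Sign properties of the weights: `a_0^{(α)} > 0`, `a_n^{(α)} = a_{-n}^{(α)}`, and
`a_n^{(α)} < 0` for `n ≠ 0` (the weights being real numbers). -/
theorem stmt10 (α : ℝ) (hα0 : 0 < α) (hα2 : α < 2) :
    (∃ x : ℝ, aWeightC α 0 = (x : ℂ) ∧ 0 < x) ∧
    (∀ n : ℤ, aWeightC α n = aWeightC α (-n)) ∧
    (∀ n : ℤ, n ≠ 0 → ∃ x : ℝ, aWeightC α n = (x : ℂ) ∧ x < 0) := by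
  have hβ0 : 0 < α/2 := by linarith
  have hβ1 : α/2 < 1 := by linarith
  refine ⟨⟨(4:ℝ)^(α/2) * ∑' k, AW.wseq (α/2) 0 k, AW.aWeight_eq α hα0 hα2 0, AW.xval_zero_pos hβ0 hβ1⟩, ?_, ?_⟩
  · intro n
    rw [AW.aWeight_eq α hα0 hα2 n, AW.aWeight_eq α hα0 hα2 (-n)]
    have : ∀ k, AW.wseq (α/2) n k = AW.wseq (α/2) (-n) k := by
      intro k
      unfold AW.wseq
      rw [AW.B_symm]
    rw [tsum_congr this]
  · intro n hn
    exact ⟨(4:ℝ)^(α/2) * ∑' k, AW.wseq (α/2) n k, AW.aWeight_eq α hα0 hα2 n, AW.xval_neg hβ0 hβ1 hn⟩
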